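/- Let g(z) = z + a_2 z² + ... be analytic and locally univalent in the unit disk with |a_2| = η < 1/5, and suppose sup_{|z|<1} |S_g(z)| = 2δ where 10η + 9δ(1+η)e^{δ/2} < 2. Then Re(1 + z g''(z)/g'(z)) < 3/2 for all |z| < 1, and consequently g is starlike, i.e., Re(z g'(z)/g(z)) > 0 on the disk. -/

import Mathlib

open Metric

/-- The Schwarzian derivative `S_f = (f''/f')' - (1/2)(f''/f')^2`. -/
noncomputable def schwarzian (f : ℂ → ℂ) (z : ℂ) : ℂ :=
  deriv (fun w => deriv (deriv f) w / deriv f w) z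
    - (1 / 2) * (deriv (deriv f) z / deriv f z) ^ 2

lemma aux_exp_bound (c : ℂ) : ‖Complex.exp c - 1‖ ≤ Real.exp (‖c‖) - 1 := by
  have hder : ∀ t ∈ Set.uIcc (0:ℝ) 1, HasDerivAt (fun s:ℝ => Complex.exp ((s:ℂ)*c))
      (c * Complex.exp ((t:ℂ)*c)) t := by
    intro t _
    have h1 : HasDerivAt (fun w:ℂ => Complex.exp (w*c)) (Complex.exp ((t:ℂ)*c) * c) (t:ℂ) :=
      (Complex.hasDerivAt_exp _).comp _ (hasDerivAt_mul_const c)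
    have h2 := h1.comp_ofReal
    simpa [mul_comm] using h2
  have hcont : Continuous (fun t:ℝ => c * Complex.exp ((t:ℂ)*c)) := by continuity
  have hint : ∫ t in (0:ℝ)..1, c * Complex.exp ((t:ℂ)*c) = Complex.exp c - 1 := by
    rw [intervalIntegral.integral_eq_sub_of_hasDerivAt hder (hcont.intervalIntegrable _ _)]
    simp
  have hder2 : ∀ t ∈ Set.uIcc (0:ℝ) 1, HasDerivAt (fun s:ℝ => Real.exp (s*(‖c‖)))
      ((‖c‖) * Real.exp (t*(‖c‖))) t := by
    intro t _
    have h1 : HasDerivAt (fun s:ℝ => s*(‖c‖)) (‖c‖) t := hasDerivAt_mul_const _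
    have := (Real.hasDerivAt_exp (t*(‖c‖))).comp t h1
    exact this.congr_deriv (mul_comm _ _)
  have hcont2 : Continuous (fun t:ℝ => (‖c‖) * Real.exp (t*(‖c‖))) := by
    continuity
  have hint2 : ∫ t in (0:ℝ)..1, (‖c‖) * Real.exp (t*(‖c‖))
      = Real.exp (‖c‖) - 1 := by
    rw [intervalIntegral.integral_eq_sub_of_hasDerivAt hder2 (hcont2.intervalIntegrable _ _)]
    simp
  calc ‖Complex.exp c - 1‖ = ‖∫ t in (0:ℝ)..1, c * Complex.exp ((t:ℂ)*c)‖ := by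
        rw [hint]
    _ ≤ ∫ t in (0:ℝ)..1, ‖c * Complex.exp ((t:ℂ)*c)‖ :=
        intervalIntegral.norm_integral_le_integral_norm zero_le_one
    _ ≤ ∫ t in (0:ℝ)..1, (‖c‖) * Real.exp (t*(‖c‖)) := by
        apply intervalIntegral.integral_mono_on zero_le_one
        · exact (hcont.norm.intervalIntegrable _ _)
        · exact (hcont2.intervalIntegrable _ _)
        · intro t ht
          rw [norm_mul, Complex.norm_exp]
          apply mul_le_mul_of_nonneg_left _ (norm_nonneg c)
          apply Real.exp_le_exp.2
          have : ((t:ℂ)*c).re = t * c.re := by simp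
          rw [this]
          exact mul_le_mul_of_nonneg_left (Complex.re_le_norm c) ht.1
    _ = Real.exp (‖c‖) - 1 := hint2

set_option maxHeartbeats 1000000 in
lemma riccati_bound (q : ℂ → ℂ) (δ a C : ℝ)
    (hq : ∀ w ∈ ball (0 : ℂ) 1, AnalyticAt ℂ q w)
    (hqder : ∀ w ∈ ball (0 : ℂ) 1,
      ‖deriv q w‖ ≤ 2*δ + (‖q w‖)^2/2)
    (hq0 : ‖q 0‖ < 2*a)
    (hδ0 : 0 ≤ δ) (ha0 : 0 ≤ a) (hδC : δ ≤ C) (hsmall : 10*a + 9*C < 2) :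
    ∀ z ∈ ball (0 : ℂ) 1, ‖q z‖
      ≤ 2*(a + C*‖z‖)/(1 - a*‖z‖ - C*(‖z‖)^2/2) := by
  have hC0 : 0 ≤ C := le_trans hδ0 hδC
  intro z hz
  rw [mem_ball_zero_iff] at hz
  set r := ‖z‖ with hrdef
  have hr0 : 0 ≤ r := norm_nonneg z
  have hr1 : r < 1 := hz
  have hmem : ∀ t : ℝ, t ∈ Set.Icc (0:ℝ) 1 → (t:ℂ)*z ∈ ball (0 : ℂ) 1 := by
    intro t ht
    rw [mem_ball_zero_iff]
    rw [norm_mul, Complex.norm_real, Real.norm_eq_abs,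
      abs_of_nonneg ht.1]
    calc t * r ≤ 1 * r := mul_le_mul_of_nonneg_right ht.2 hr0
      _ < 1 := by rwa [one_mul]
  have hqan : AnalyticOnNhd ℂ q (ball (0:ℂ) 1) := hq
  have hqc : ContinuousOn q (ball (0:ℂ) 1) := hqan.continuousOn
  have hq'c : ContinuousOn (deriv q) (ball (0:ℂ) 1) := hqan.deriv.continuousOn
  have hσ : Continuous (fun t:ℝ => (t:ℂ)*z) := by continuity
  -- the functions
  set u : ℝ → ℝ := fun t => ‖q ((t:ℂ)*z)‖ with hu_def
  set Φ : ℝ → ℝ := fun t => 2*(a + C*r*t)/(1 - a*r*t - C*r^2*t^2/2) with hΦ_def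
  set Φ' : ℝ → ℝ := fun t => (2*(C*r) * (1 - a*r*t - C*r^2*t^2/2)
      - 2*(a + C*r*t) * (-(a*r) - C*r^2*t)) / (1 - a*r*t - C*r^2*t^2/2)^2 with hΦ'_def
  have hDpos : ∀ t : ℝ, 0 ≤ t → t ≤ 1 → 0 < 1 - a*r*t - C*r^2*t^2/2 := by
    intro t h0 h1
    have hrt0 : 0 ≤ r*t := mul_nonneg hr0 h0
    have hrt1 : r*t ≤ 1 := by nlinarith
    have h2 : a*(r*t) ≤ a := mul_le_of_le_one_right ha0 hrt1
    have h3 : (r*t)^2 ≤ 1 := by nlinarith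
    have h4 : C*(r*t)^2 ≤ C := mul_le_of_le_one_right hC0 h3
    nlinarith [h2, h4]
  have hΦpos : ∀ t : ℝ, 0 ≤ t → t ≤ 1 → 0 ≤ Φ t := by
    intro t h0 h1
    apply div_nonneg _ (hDpos t h0 h1).le
    nlinarith [mul_nonneg (mul_nonneg hC0 hr0) h0]
  have hΦd : ∀ t : ℝ, 0 ≤ t → t ≤ 1 → HasDerivAt Φ (Φ' t) t := by
    intro t h0 h1
    have hn : HasDerivAt (fun t:ℝ => 2*(a + C*r*t)) (2*(C*r)) t := by
      have h1' : HasDerivAt (fun t:ℝ => C*r*t) (C*r) t := by simpa using (hasDerivAt_id t).const_mul (C*r)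
      simpa using (h1'.const_add a).const_mul 2
    have hd : HasDerivAt (fun t:ℝ => 1 - a*r*t - C*r^2*t^2/2) (-(a*r) - C*r^2*t) t := by
      have ha' : HasDerivAt (fun t:ℝ => a*r*t) (a*r) t := by simpa using (hasDerivAt_id t).const_mul (a*r)
      have hb : HasDerivAt (fun t:ℝ => C*r^2*t^2/2) (C*r^2*t) t := by
        have := ((hasDerivAt_pow 2 t).const_mul (C*r^2)).div_const 2
        exact this.congr_deriv (by ring)
      have := ((hasDerivAt_const t (1:ℝ)).sub ha').sub hb
      exact this.congr_deriv (by ring)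
    exact hn.div hd (ne_of_gt (hDpos t h0 h1))
  have hucont : ContinuousOn u (Set.Icc (0:ℝ) 1) := by
    apply continuous_norm.comp_continuousOn
    exact hqc.comp hσ.continuousOn hmem
  have hu0 : u 0 < 2*a := by
    simpa [hu_def] using hq0
  have hΦ0 : Φ 0 = 2*a := by
    simp [hΦ_def]
  -- main comparison
  have main : ∀ t ∈ Set.Icc (0:ℝ) 1, u t < Φ t := by
    by_contra hcon
    push_neg at hcon
    obtain ⟨t₁, ht₁, hΦu₁⟩ := hcon
    set E := {t | t ∈ Set.Icc (0:ℝ) 1 ∧ Φ t ≤ u t} with hE_def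
    have hEne : E.Nonempty := ⟨t₁, ht₁, hΦu₁⟩
    have hEsub : E ⊆ Set.Icc (0:ℝ) 1 := fun t ht => ht.1
    have hEbdd : BddBelow E := (bddBelow_Icc : BddBelow (Set.Icc (0:ℝ) 1)).mono hEsub
    have hΦcont : ContinuousOn Φ (Set.Icc (0:ℝ) 1) := fun t ht =>
      (hΦd t ht.1 ht.2).continuousAt.continuousWithinAt
    have hEclosed : IsClosed E := by
      have heq : E = Set.Icc (0:ℝ) 1 ∩ (fun t => u t - Φ t) ⁻¹' (Set.Ici 0) := by
        ext t
        simp only [hE_def, Set.mem_setOf_eq, Set.mem_inter_iff, Set.mem_preimage,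
          Set.mem_Ici, sub_nonneg]
        try tauto
      rw [heq]
      exact (hucont.sub hΦcont).preimage_isClosed_of_isClosed isClosed_Icc isClosed_Ici
    set t₀ := sInf E with ht₀_def
    have ht₀E : t₀ ∈ E := hEclosed.csInf_mem hEne hEbdd
    obtain ⟨ht₀Icc, hΦut₀⟩ := ht₀E
    have ht₀pos : 0 < t₀ := by
      rcases eq_or_lt_of_le ht₀Icc.1 with h | h
      · exfalso; rw [← h] at hΦut₀; rw [hΦ0] at hΦut₀; linarith
      · exact h
    have hbefore : ∀ s, 0 ≤ s → s < t₀ → u s < Φ s := by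
      intro s h0 hlt
      by_contra h
      push_neg at h
      exact (notMem_of_lt_csInf hlt hEbdd) ⟨⟨h0, le_trans hlt.le ht₀Icc.2⟩, h⟩
    have hult : u t₀ ≤ Φ t₀ := by
      have hIco : t₀ ∈ closure (Set.Ico 0 t₀) := by
        rw [closure_Ico (ne_of_lt ht₀pos)]
        exact ⟨ht₀Icc.1, le_refl _⟩
      haveI := mem_closure_iff_nhdsWithin_neBot.mp hIco
      have hsub : Set.Ico (0:ℝ) t₀ ⊆ Set.Icc 0 1 := fun s hs =>
        ⟨hs.1, le_trans hs.2.le ht₀Icc.2⟩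
      have hu_t : Filter.Tendsto u (nhdsWithin t₀ (Set.Ico 0 t₀)) (nhds (u t₀)) :=
        (hucont t₀ ht₀Icc).mono hsub
      have hΦ_t : Filter.Tendsto Φ (nhdsWithin t₀ (Set.Ico 0 t₀)) (nhds (Φ t₀)) :=
        (hΦd t₀ ht₀Icc.1 ht₀Icc.2).continuousAt.continuousWithinAt
      apply le_of_tendsto_of_tendsto hu_t hΦ_t
      filter_upwards [self_mem_nhdsWithin] with s hs
      exact (hbefore s hs.1 hs.2).le
    have hle : ∀ s ∈ Set.Icc (0:ℝ) t₀, u s ≤ Φ s := by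
      intro s hs
      rcases eq_or_lt_of_le hs.2 with h | h
      · rw [h]; exact hult
      · exact (hbefore s hs.1 h).le
    have hmem' : ∀ s ∈ Set.Icc (0:ℝ) t₀, (s:ℂ)*z ∈ ball (0:ℂ) 1 := fun s hs =>
      hmem s ⟨hs.1, le_trans hs.2 ht₀Icc.2⟩
    -- FTC for q along the segment
    have hqseg : ∀ t ∈ Set.uIcc (0:ℝ) t₀,
        HasDerivAt (fun s:ℝ => q ((s:ℂ)*z)) (z * deriv q ((t:ℂ)*z)) t := by
      intro t ht
      rw [Set.uIcc_of_le ht₀pos.le] at ht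
      have hmemt := hmem' t ht
      have h1 : HasDerivAt (fun w:ℂ => q (w*z)) (deriv q ((t:ℂ)*z) * z) (t:ℂ) :=
        HasDerivAt.comp _ ((hq _ hmemt).differentiableAt.hasDerivAt) (hasDerivAt_mul_const z)
      simpa [mul_comm] using h1.comp_ofReal
    have hcont_int : ContinuousOn (fun t:ℝ => z * deriv q ((t:ℂ)*z)) (Set.uIcc (0:ℝ) t₀) := by
      rw [Set.uIcc_of_le ht₀pos.le]
      apply ContinuousOn.mul continuousOn_const
      exact hq'c.comp hσ.continuousOn hmem'
    have hftc : ∫ t in (0:ℝ)..t₀, z * deriv q ((t:ℂ)*z)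
        = q ((t₀:ℂ)*z) - q (((0:ℝ):ℂ)*z) :=
      intervalIntegral.integral_eq_sub_of_hasDerivAt hqseg (hcont_int.intervalIntegrable)
    have hΦ'cont : ContinuousOn Φ' (Set.uIcc (0:ℝ) t₀) := by
      rw [Set.uIcc_of_le ht₀pos.le]
      apply ContinuousOn.div
      · apply Continuous.continuousOn; fun_prop
      · apply Continuous.continuousOn; fun_prop
      · intro t ht
        exact ne_of_gt (pow_pos (hDpos t ht.1 (le_trans ht.2 ht₀Icc.2)) 2)
    have hIub : ∀ t ∈ Set.Icc (0:ℝ) t₀, ‖z * deriv q ((t:ℂ)*z)‖ ≤ Φ' t := by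
      intro t ht
      have ht1 : t ≤ 1 := le_trans ht.2 ht₀Icc.2
      have hmemt := hmem' t ht
      have hD := hDpos t ht.1 ht1
      set D := 1 - a*r*t - C*r^2*t^2/2 with hD_def
      have hD1 : D ≤ 1 := by
        have hrt0 : 0 ≤ r*t := mul_nonneg hr0 ht.1
        have : 0 ≤ C*r^2*t^2 := by positivity
        simp only [hD_def]; nlinarith
      have hN0 : 0 ≤ a + C*r*t := by
        have : 0 ≤ C*r*t := mul_nonneg (mul_nonneg hC0 hr0) ht.1
        linarith
      have h5 : ‖z * deriv q ((t:ℂ)*z)‖ = r * ‖deriv q ((t:ℂ)*z)‖ := by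
        rw [norm_mul]
      have h6 : ‖deriv q ((t:ℂ)*z)‖ ≤ 2*δ + (u t)^2/2 := hqder _ hmemt
      have h7 : u t ≤ Φ t := hle t ht
      have hu_nn : 0 ≤ u t := norm_nonneg _
      have h8 : (u t)^2 ≤ (Φ t)^2 := by
        apply pow_le_pow_left₀ hu_nn h7
      have h10 : (Φ t)^2 * D^2 = 4*(a + C*r*t)^2 := by
        simp only [hΦ_def, ← hD_def]
        field_simp
        ring
      have h10' : r * ((Φ t)^2 * D^2) = r * (4*(a + C*r*t)^2) := by rw [h10]
      have h9 : δ * D ≤ C := by nlinarith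
      have h11 : (r*D)*(δ*D) ≤ (r*D)*C :=
        mul_le_mul_of_nonneg_left h9 (mul_nonneg hr0 hD.le)
      have hfin : r * (2*δ + (Φ t)^2/2) ≤ Φ' t := by
        have hΦt : Φ t = 2*(a + C*r*t)/D := by simp only [hΦ_def, ← hD_def]
        have hL : r * (2*δ + (Φ t)^2/2) = (2*r*δ*D^2 + 2*r*(a + C*r*t)^2)/D^2 := by
          rw [hΦt]; field_simp
        have hR : Φ' t = (2*C*r*D + 2*r*(a + C*r*t)^2)/D^2 := by
          simp only [hΦ'_def, ← hD_def]
          have hnum : 2*(C*r)*D - 2*(a + C*r*t)*(-(a*r) - C*r^2*t)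
              = 2*C*r*D + 2*r*(a+C*r*t)^2 := by ring
          rw [hnum]
        rw [hL, hR, div_le_div_iff_of_pos_right (by positivity)]
        nlinarith [h11]
      calc ‖z * deriv q ((t:ℂ)*z)‖ = r * ‖deriv q ((t:ℂ)*z)‖ := h5
        _ ≤ r * (2*δ + (u t)^2/2) := mul_le_mul_of_nonneg_left h6 hr0
        _ ≤ r * (2*δ + (Φ t)^2/2) := by
            apply mul_le_mul_of_nonneg_left _ hr0
            linarith
        _ ≤ Φ' t := hfin
    have hint2 : ∫ t in (0:ℝ)..t₀, ‖z * deriv q ((t:ℂ)*z)‖ ≤ ∫ t in (0:ℝ)..t₀, Φ' t := by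
      apply intervalIntegral.integral_mono_on ht₀pos.le
      · exact hcont_int.norm.intervalIntegrable
      · exact hΦ'cont.intervalIntegrable
      · exact hIub
    have hint3 : ∫ t in (0:ℝ)..t₀, Φ' t = Φ t₀ - Φ 0 := by
      apply intervalIntegral.integral_eq_sub_of_hasDerivAt
      · intro t ht
        rw [Set.uIcc_of_le ht₀pos.le] at ht
        exact hΦd t ht.1 (le_trans ht.2 ht₀Icc.2)
      · exact hΦ'cont.intervalIntegrable
    have e2 : u t₀ ≤ u 0 + ‖∫ t in (0:ℝ)..t₀, z * deriv q ((t:ℂ)*z)‖ := by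
      have e1 : q ((t₀:ℂ)*z) = q (((0:ℝ):ℂ)*z) + ∫ t in (0:ℝ)..t₀, z * deriv q ((t:ℂ)*z) := by
        rw [hftc]; ring
      simp only [hu_def]
      rw [e1]
      exact norm_add_le _ _
    have e3 : ‖∫ t in (0:ℝ)..t₀, z * deriv q ((t:ℂ)*z)‖
        ≤ ∫ t in (0:ℝ)..t₀, ‖z * deriv q ((t:ℂ)*z)‖ :=
      intervalIntegral.norm_integral_le_integral_norm ht₀pos.le
    rw [hΦ0] at *
    linarith
  have h1 := main 1 ⟨zero_le_one, le_refl 1⟩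
  have hu1 : u 1 = ‖q z‖ := by
    simp [hu_def]
  have hΦ1 : Φ 1 = 2*(a + C*r)/(1 - a*r - C*r^2/2) := by
    simp [hΦ_def]
  rw [hu1, hΦ1] at h1
  exact h1.le

set_option maxHeartbeats 1000000 in
/-- Corollary 1: if `g ∈ A` is locally univalent with `|a₂| = η < 1/5` and
`|S_g| ≤ 2δ` on the disk with `10η + 9δ(1+η)e^{δ/2} < 2`, then
`Re(1 + zg''/g') < 3/2` on the disk, and `g` is starlike. -/
theorem corollary1 (g : ℂ → ℂ)
    (hg : AnalyticOnNhd ℂ g (ball (0 : ℂ) 1))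
    (hg0 : g 0 = 0) (hg1 : deriv g 0 = 1)
    (hg' : ∀ z ∈ ball (0 : ℂ) 1, deriv g z ≠ 0)
    (η δ : ℝ) (hη : η = ‖deriv (deriv g) 0 / 2‖) (hη5 : η < 1 / 5)
    (hδ0 : 0 ≤ δ)
    (hS : ∀ z ∈ ball (0 : ℂ) 1, ‖schwarzian g z‖ ≤ 2 * δ)
    (hineq : 10 * η + 9 * δ * (1 + η) * Real.exp (δ / 2) < 2) :
    (∀ z ∈ ball (0 : ℂ) 1,
        (1 + z * deriv (deriv g) z / deriv g z).re < 3 / 2) ∧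
      ∀ z ∈ ball (0 : ℂ) 1, z ≠ 0 → (z * deriv g z / g z).re > 0 := by
  set q : ℂ → ℂ := fun w => deriv (deriv g) w / deriv g w with hq_def
  have hη0 : 0 ≤ η := by rw [hη]; exact norm_nonneg _
  -- analytic facts
  have hqa : ∀ w ∈ ball (0 : ℂ) 1, AnalyticAt ℂ q w := by
    intro w hw
    exact ((hg.deriv.deriv) w hw).div (hg.deriv w hw) (hg' w hw)
  -- Riccati identity is definitional
  have hs_eq : ∀ w : ℂ, deriv q w = schwarzian g w + 1/2 * q w ^ 2 := by
    intro w
    simp only [hq_def, schwarzian]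
    ring
  have hqder : ∀ w ∈ ball (0 : ℂ) 1,
      ‖deriv q w‖ ≤ 2*δ + (‖q w‖)^2/2 := by
    intro w hw
    rw [hs_eq w]
    calc ‖schwarzian g w + 1/2 * q w ^ 2‖
        ≤ ‖schwarzian g w‖ + ‖1/2 * q w ^ 2‖ :=
          norm_add_le _ _
      _ ≤ 2*δ + (‖q w‖)^2/2 := by
          have h1 := hS w hw
          have h2 : ‖1/2 * q w ^ 2‖ = (‖q w‖)^2/2 := by
            rw [norm_mul, norm_pow, norm_div, norm_one, Complex.norm_two]
            ring
          rw [h2]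
          linarith
  -- |q 0| = 2η
  have hq0abs : ‖q 0‖ = 2*η := by
    have : q 0 = deriv (deriv g) 0 := by
      simp only [hq_def, hg1, div_one]
    rw [this, hη]
    rw [norm_div, Complex.norm_two]
    ring
  -- constants
  have hbase : 10*η + 9*δ < 2 := by
    have h1 : (1:ℝ) ≤ (1+η) * Real.exp (δ/2) := by
      have := Real.one_le_exp (by linarith : (0:ℝ) ≤ δ/2)
      nlinarith
    nlinarith [mul_le_mul_of_nonneg_left h1 hδ0]
  set ε := (2 - (10*η + 9*δ))/20 with hε_def
  have hεpos : 0 < ε := by rw [hε_def]; linarith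
  set a := η + ε with ha_def
  set C := δ + ε with hC_def
  have ha0 : 0 ≤ a := by rw [ha_def]; linarith
  have hC0 : 0 ≤ C := by rw [hC_def]; linarith
  have hδC : δ ≤ C := by rw [hC_def]; linarith
  have hsmall : 10*a + 9*C < 2 := by rw [ha_def, hC_def, hε_def]; ring_nf; linarith
  have hq0lt : ‖q 0‖ < 2*a := by rw [hq0abs, ha_def]; linarith
  have hkey := riccati_bound q δ a C hqa hqder hq0lt hδ0 ha0 hδC hsmall
  constructor
  · -- Part 1
    intro z hz
    have hr0 : 0 ≤ ‖z‖ := norm_nonneg z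
    have hr1 : ‖z‖ < 1 := by
      rw [mem_ball_zero_iff] at hz
      exact hz
    set r := ‖z‖ with hr_def
    have hD : 0 < 1 - a*r - C*r^2/2 := by nlinarith [sq_nonneg r]
    have hqz := hkey z hz
    have habs : ‖z * q z‖ < 1/2 := by
      rw [norm_mul]
      calc r * ‖q z‖ ≤ r * (2*(a + C*r)/(1 - a*r - C*r^2/2)) :=
            mul_le_mul_of_nonneg_left hqz hr0
        _ < 1/2 := by
            rw [mul_div_assoc']
            rw [div_lt_iff₀ hD]
            nlinarith [mul_nonneg ha0 hr0, mul_nonneg hC0 (sq_nonneg r),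
              mul_nonneg (mul_nonneg ha0 hr0) hr0,
              mul_nonneg hC0 hr0, sq_nonneg r, sq_nonneg (1-r),
              mul_nonneg (mul_nonneg hC0 hr0) hr0]
    have heq : z * deriv (deriv g) z / deriv g z = z * q z := mul_div_assoc _ _ _
    rw [heq, Complex.add_re, Complex.one_re]
    have := Complex.re_le_norm (z * q z)
    linarith
  · -- Part 2
    have hqan : AnalyticOnNhd ℂ q (ball (0:ℂ) 1) := hqa
    have hqc : ContinuousOn q (ball (0:ℂ) 1) := hqan.continuousOn
    have hgpc : ContinuousOn (deriv g) (ball (0:ℂ) 1) := hg.deriv.continuousOn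
    obtain ⟨β, hβ_def⟩ : ∃ b : ℝ, b = 1 - a - C/2 := ⟨_, rfl⟩
    have hβ45 : 4/5 < β := by rw [hβ_def]; nlinarith
    have hβpos : 0 < β := lt_trans (by norm_num) hβ45
    obtain ⟨ρ, hρ_def⟩ : ∃ p : ℝ, p = (β⁻¹)^2 - 1 := ⟨_, rfl⟩
    have hρ916 : ρ < 9/16 := by
      have h1 : β⁻¹ < 5/4 := by
        rw [inv_lt_comm₀ hβpos (by norm_num)]
        linarith
      have h2 : (0:ℝ) ≤ β⁻¹ := inv_nonneg.mpr hβpos.le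
      have h3 : (β⁻¹)^2 < (5/4)^2 := by nlinarith
      rw [hρ_def]; nlinarith
    have hρ0 : 0 ≤ ρ := by
      have h1 : β ≤ 1 := by rw [hβ_def]; linarith
      have h2 : 1 ≤ β⁻¹ := (one_le_inv₀ hβpos).mpr h1
      have h3 : 1 ≤ (β⁻¹)^2 := one_le_pow₀ h2
      rw [hρ_def]; linarith
    -- uniform bound on |g' - 1| on the ball
    have hg'near : ∀ w ∈ ball (0:ℂ) 1, ‖deriv g w - 1‖ ≤ ρ := by
      intro w hw
      have hr1 : ‖w‖ < 1 := by
        rw [mem_ball_zero_iff] at hw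
        exact hw
      set r := ‖w‖ with hr_def
      have hr0 : 0 ≤ r := norm_nonneg w
      have hw' : w ∈ ball (0:ℂ) 1 := by
        rwa [mem_ball_zero_iff]
      have hmem : ∀ t : ℝ, t ∈ Set.Icc (0:ℝ) 1 → (t:ℂ)*w ∈ ball (0 : ℂ) 1 := by
        intro t ht
        rw [mem_ball_zero_iff, norm_mul, Complex.norm_real, Real.norm_eq_abs,
           abs_of_nonneg ht.1]
        calc t * r ≤ 1 * r := mul_le_mul_of_nonneg_right ht.2 hr0
          _ < 1 := by rwa [one_mul]
      have hDpos : ∀ t : ℝ, 0 ≤ t → t ≤ 1 → 0 < 1 - a*r*t - C*r^2*t^2/2 := by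
        intro t h0 h1
        have hrt0 : 0 ≤ r*t := mul_nonneg hr0 h0
        have hrt1 : r*t ≤ 1 := by nlinarith
        have h2 : a*(r*t) ≤ a := mul_le_of_le_one_right ha0 hrt1
        have h3 : (r*t)^2 ≤ 1 := by nlinarith
        have h4 : C*(r*t)^2 ≤ C := mul_le_of_le_one_right hC0 h3
        nlinarith [h2, h4]
      have hσ : Continuous (fun t:ℝ => (t:ℂ)*w) :=
        Complex.continuous_ofReal.mul continuous_const
      set Sw := (fun t:ℝ => (t:ℂ)*w) ⁻¹' (ball (0:ℂ) 1) with hSw_def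
      have hSwopen : IsOpen Sw := isOpen_ball.preimage hσ
      have hSwsub : Set.Icc (0:ℝ) 1 ⊆ Sw := fun t ht => hmem t ht
      have hfc : ContinuousOn (fun s:ℝ => w * q ((s:ℂ)*w)) Sw :=
        continuousOn_const.mul (hqc.comp hσ.continuousOn (fun t ht => ht))
      set m : ℝ → ℂ := fun t => ∫ s in (0:ℝ)..t, w * q ((s:ℂ)*w) with hm_def
      have hm_deriv : ∀ t ∈ Set.Icc (0:ℝ) 1, HasDerivAt m (w * q ((t:ℂ)*w)) t := by
        intro t ht
        apply intervalIntegral.integral_hasDerivAt_right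
        · apply ContinuousOn.intervalIntegrable
          apply hfc.mono
          intro s hs
          rw [Set.uIcc_of_le ht.1] at hs
          exact hSwsub ⟨hs.1, le_trans hs.2 ht.2⟩
        · exact hfc.stronglyMeasurableAtFilter hSwopen t (hSwsub ht)
        · exact (hfc t (hSwsub ht)).continuousAt (hSwopen.mem_nhds (hSwsub ht))
      set G : ℝ → ℂ := fun t => deriv g ((t:ℂ)*w) * Complex.exp (-(m t)) with hG_def
      have hGd : ∀ t ∈ Set.uIcc (0:ℝ) 1, HasDerivAt G ((fun _ => (0:ℂ)) t) t := by
        intro t ht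
        rw [Set.uIcc_of_le zero_le_one] at ht
        have hmt := hmem t ht
        have hA : HasDerivAt (fun s:ℝ => deriv g ((s:ℂ)*w))
            (deriv (deriv g) ((t:ℂ)*w) * w) t := by
          have h1 : HasDerivAt (fun x:ℂ => deriv g (x*w))
              (deriv (deriv g) ((t:ℂ)*w) * w) (t:ℂ) :=
            HasDerivAt.comp (h₂ := deriv g) (t:ℂ) ((hg.deriv _ hmt).differentiableAt.hasDerivAt)
              (hasDerivAt_mul_const w)
          exact h1.comp_ofReal
        have hB : HasDerivAt (fun s:ℝ => Complex.exp (-(m s)))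
            (Complex.exp (-(m t)) * (-(w * q ((t:ℂ)*w)))) t :=
          ((hm_deriv t ht).neg).cexp
        have h3 := hA.mul hB
        have hql : q ((t:ℂ)*w) * deriv g ((t:ℂ)*w) = deriv (deriv g) ((t:ℂ)*w) := by
          simp only [hq_def]
          exact div_mul_cancel₀ _ (hg' _ hmt)
        refine h3.congr_deriv ?_; show _ = (0:ℂ)
        rw [← hql]
        ring
      have hG10 : G 1 = G 0 := by
        have h4 := intervalIntegral.integral_eq_sub_of_hasDerivAt hGd
          (intervalIntegrable_const)
        simp only [intervalIntegral.integral_const, smul_zero] at h4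
        have := h4.symm
        rwa [sub_eq_zero] at this
      have hG0 : G 0 = 1 := by
        simp only [hG_def, hm_def, Complex.ofReal_zero, zero_mul, hg1,
          intervalIntegral.integral_same, neg_zero, Complex.exp_zero, one_mul]
      have hG1 : G 1 = deriv g w * Complex.exp (-(m 1)) := by
        simp only [hG_def, Complex.ofReal_one, one_mul]
      have hgw_exp : deriv g w = Complex.exp (m 1) := by
        have h6 : deriv g w * Complex.exp (-(m 1)) = 1 := by rw [← hG1, hG10, hG0]
        rw [Complex.exp_neg] at h6
        exact (mul_inv_eq_one₀ (Complex.exp_ne_zero _)).mp h6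
      -- bound |m 1|
      have hm1b : ‖m 1‖ ≤ -2 * Real.log (1 - a*r - C*r^2/2) := by
        have hnormint : ‖m 1‖ ≤ ∫ t in (0:ℝ)..1, ‖w * q ((t:ℂ)*w)‖ := by
          rw [hm_def]
          exact intervalIntegral.norm_integral_le_integral_norm zero_le_one
        set J' : ℝ → ℝ := fun t =>
          -2 * ((1 - a*r*t - C*r^2*t^2/2)⁻¹ * (-(a*r) - C*r^2*t)) with hJ'_def
        have hJd : ∀ t ∈ Set.uIcc (0:ℝ) 1,
            HasDerivAt (fun s:ℝ => -2 * Real.log (1 - a*r*s - C*r^2*s^2/2)) (J' t) t := by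
          intro t ht
          rw [Set.uIcc_of_le zero_le_one] at ht
          have hD := hDpos t ht.1 ht.2
          have ha' : HasDerivAt (fun s:ℝ => a*r*s) (a*r) t := by
            simpa using (hasDerivAt_id t).const_mul (a*r)
          have hb : HasDerivAt (fun s:ℝ => C*r^2*s^2/2) (C*r^2*t) t := by
            have := ((hasDerivAt_pow 2 t).const_mul (C*r^2)).div_const 2
            exact this.congr_deriv (by ring)
          have hd : HasDerivAt (fun s:ℝ => 1 - a*r*s - C*r^2*s^2/2)
              (-(a*r) - C*r^2*t) t := by
            have := ((hasDerivAt_const t (1:ℝ)).sub ha').sub hb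
            exact this.congr_deriv (by ring)
          have hlog := (Real.hasDerivAt_log (ne_of_gt hD)).comp t hd
          simpa [hJ'_def] using hlog.const_mul (-2:ℝ)
        have hJ'cont : ContinuousOn J' (Set.uIcc (0:ℝ) 1) := by
          rw [Set.uIcc_of_le zero_le_one]
          apply ContinuousOn.mul continuousOn_const
          apply ContinuousOn.mul _ (by fun_prop)
          apply ContinuousOn.inv₀ (by fun_prop)
          intro t ht
          exact ne_of_gt (hDpos t ht.1 ht.2)
        have hmono : ∫ t in (0:ℝ)..1, ‖w * q ((t:ℂ)*w)‖ ≤ ∫ t in (0:ℝ)..1, J' t := by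
          apply intervalIntegral.integral_mono_on zero_le_one
          · apply ContinuousOn.intervalIntegrable
            apply ContinuousOn.norm
            rw [Set.uIcc_of_le zero_le_one]
            exact continuousOn_const.mul (hqc.comp hσ.continuousOn hmem)
          · exact hJ'cont.intervalIntegrable
          · intro t ht
            have hD := hDpos t ht.1 ht.2
            have habs_tw : ‖(t:ℂ)*w‖ = r*t := by
              rw [norm_mul, Complex.norm_real, Real.norm_eq_abs, abs_of_nonneg ht.1]
              ring
            have hkq := hkey ((t:ℂ)*w) (hmem t ht)
            rw [habs_tw] at hkq
            have h7 : ‖w * q ((t:ℂ)*w)‖ = r * ‖q ((t:ℂ)*w)‖ := by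
              rw [norm_mul]
            rw [h7]
            have h8 : r * ‖q ((t:ℂ)*w)‖
                ≤ r * (2*(a + C*(r*t))/(1 - a*(r*t) - C*(r*t)^2/2)) :=
              mul_le_mul_of_nonneg_left hkq hr0
            have h9 : r * (2*(a + C*(r*t))/(1 - a*(r*t) - C*(r*t)^2/2)) = J' t := by
              have hD' : 1 - a*(r*t) - C*(r*t)^2/2 = 1 - a*r*t - C*r^2*t^2/2 := by ring
              rw [hJ'_def, hD']
              field_simp
              ring
            rw [← h9]
            exact h8
        have hftcJ : ∫ t in (0:ℝ)..1, J' t = -2 * Real.log (1 - a*r - C*r^2/2) := by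
          rw [intervalIntegral.integral_eq_sub_of_hasDerivAt hJd hJ'cont.intervalIntegrable]
          norm_num
        calc ‖m 1‖ ≤ ∫ t in (0:ℝ)..1, ‖w * q ((t:ℂ)*w)‖ := hnormint
          _ ≤ ∫ t in (0:ℝ)..1, J' t := hmono
          _ = -2 * Real.log (1 - a*r - C*r^2/2) := hftcJ
      -- conclude
      have hDr : 0 < 1 - a*r - C*r^2/2 := by
        have := hDpos 1 zero_le_one (le_refl 1)
        calc (0:ℝ) < 1 - a*r*1 - C*r^2*1^2/2 := this
          _ = 1 - a*r - C*r^2/2 := by ring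
      have hβD : β ≤ 1 - a*r - C*r^2/2 := by
        rw [hβ_def]
        nlinarith [mul_le_of_le_one_right ha0 hr1.le, sq_nonneg r,
          mul_le_of_le_one_right hC0 (by nlinarith [sq_nonneg r] : r^2 ≤ 1)]
      have hlog : -2 * Real.log (1 - a*r - C*r^2/2) ≤ -2 * Real.log β := by
        have := Real.log_le_log hβpos hβD
        linarith
      have hexpβ : Real.exp (-2 * Real.log β) = (β⁻¹)^2 := by
        rw [show (-2 : ℝ) * Real.log β = -(Real.log β + Real.log β) by ring,
          Real.exp_neg, Real.exp_add, Real.exp_log hβpos, pow_two, mul_inv]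
      calc ‖deriv g w - 1‖ = ‖Complex.exp (m 1) - 1‖ := by
            rw [hgw_exp]
        _ ≤ Real.exp (‖m 1‖) - 1 := aux_exp_bound _
        _ ≤ Real.exp (-2 * Real.log β) - 1 := by
            have := Real.exp_le_exp.mpr (le_trans hm1b hlog)
            linarith
        _ = ρ := by rw [hexpβ, hρ_def]
    -- final assembly
    intro z hz hz0
    set v := ∫ t in (0:ℝ)..1, deriv g ((t:ℂ)*z) with hv_def
    have hr1 : ‖z‖ < 1 := by
      rw [mem_ball_zero_iff] at hz
      exact hz
    have hr0 : 0 ≤ ‖z‖ := norm_nonneg z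
    have hmem : ∀ t : ℝ, t ∈ Set.Icc (0:ℝ) 1 → (t:ℂ)*z ∈ ball (0 : ℂ) 1 := by
      intro t ht
      rw [mem_ball_zero_iff, norm_mul, Complex.norm_real, Real.norm_eq_abs,
         abs_of_nonneg ht.1]
      calc t * ‖z‖ ≤ 1 * ‖z‖ := mul_le_mul_of_nonneg_right ht.2 hr0
        _ < 1 := by rwa [one_mul]
    have hσ : Continuous (fun t:ℝ => (t:ℂ)*z) :=
      Complex.continuous_ofReal.mul continuous_const
    have hgd : ∀ t ∈ Set.uIcc (0:ℝ) 1,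
        HasDerivAt (fun s:ℝ => g ((s:ℂ)*z)) (deriv g ((t:ℂ)*z) * z) t := by
      intro t ht
      rw [Set.uIcc_of_le zero_le_one] at ht
      have h1 : HasDerivAt (fun x:ℂ => g (x*z)) (deriv g ((t:ℂ)*z) * z) (t:ℂ) :=
        HasDerivAt.comp (t:ℂ) ((hg _ (hmem t ht)).differentiableAt.hasDerivAt)
          (hasDerivAt_mul_const z)
      exact h1.comp_ofReal
    have hgdc : ContinuousOn (fun t:ℝ => deriv g ((t:ℂ)*z)) (Set.uIcc (0:ℝ) 1) := by
      rw [Set.uIcc_of_le zero_le_one]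
      exact hgpc.comp hσ.continuousOn hmem
    have hftcg : ∫ t in (0:ℝ)..1, deriv g ((t:ℂ)*z) * z = g z := by
      rw [intervalIntegral.integral_eq_sub_of_hasDerivAt hgd
        ((hgdc.mul continuousOn_const).intervalIntegrable)]
      simp [hg0]
    have hgz : g z = z * v := by
      rw [← hftcg, intervalIntegral.integral_mul_const, hv_def, mul_comm]
    have hp := hg'near z hz
    have hv1 : ‖v - 1‖ ≤ ρ := by
      have hsub : v - 1 = ∫ t in (0:ℝ)..1, (deriv g ((t:ℂ)*z) - 1) := by
        rw [intervalIntegral.integral_sub (hgdc.intervalIntegrable)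
          intervalIntegrable_const]
        simp [hv_def]
      rw [hsub]
      calc ‖∫ t in (0:ℝ)..1, (deriv g ((t:ℂ)*z) - 1)‖
          ≤ ∫ t in (0:ℝ)..1, ‖deriv g ((t:ℂ)*z) - 1‖ :=
            intervalIntegral.norm_integral_le_integral_norm zero_le_one
        _ ≤ ∫ t in (0:ℝ)..1, ρ := by
            apply intervalIntegral.integral_mono_on zero_le_one
            · exact ((hgdc.sub continuousOn_const).norm).intervalIntegrable
            · exact intervalIntegrable_const
            · intro t ht
              exact hg'near _ (hmem t ht)
        _ = ρ := by rw [intervalIntegral.integral_const]; norm_num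
    have hv0 : v ≠ 0 := by
      intro h
      rw [h] at hv1
      simp only [zero_sub, norm_neg, norm_one] at hv1
      linarith
    have hquot : z * deriv g z / g z = deriv g z / v := by
      rw [hgz, mul_div_mul_left _ _ hz0]
    rw [hquot, gt_iff_lt, Complex.div_re]
    have hsq : ∀ x : ℂ, ‖x - 1‖ ≤ ρ →
        (x.re - 1)^2 + x.im^2 ≤ (9/16)^2 := by
      intro x hx
      have h1 : ‖x-1‖ ≤ 9/16 := le_of_lt (lt_of_le_of_lt hx hρ916)
      have h2 : (‖x-1‖)^2 ≤ (9/16)^2 := by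
        apply pow_le_pow_left₀ (norm_nonneg _) h1
      rw [Complex.sq_norm, Complex.normSq_apply] at h2
      simp only [Complex.sub_re, Complex.sub_im, Complex.one_re, Complex.one_im,
        sub_zero] at h2
      nlinarith [h2]
    have hp2 := hsq _ hp
    have hv2 := hsq _ hv1
    rw [← add_div]
    apply div_pos _ (Complex.normSq_pos.mpr hv0)
    nlinarith [hp2, hv2, sq_nonneg ((deriv g z).im + v.im),
      sq_nonneg ((deriv g z).re + v.re - 1)]
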